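/- Let R be a commutative ring, let (T,F) be a hereditary torsion pair in Mod-R, and let 𝓔 = {E : E an injective R-module with E ∈ F} be the corresponding class of injective modules. Then F is closed under direct limits (directed colimits) if and only if 𝓔 satisfies condition (††): for every directed system (E_i : i ∈ I) of modules in 𝓔, every injective R-module G admitting an injective R-linear map j from the direct limit lim_{i∈I} E_i into G whose image is an essential submodule of G (i.e., every nonzero submodule of G has nonzero intersection with the image of j) belongs to 𝓔. -/

import Mathlib

open CategoryTheory
universe u

variable {R : Type u} [CommRing R]

/-- A torsion pair `(T, F)` in `Mod-R`. -/
structure IsTorsionPair (T F : Set (ModuleCat.{u} R)) : Prop where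
  mem_torsion_iff : ∀ M : ModuleCat.{u} R, M ∈ T ↔ ∀ N ∈ F, ∀ f : M ⟶ N, f = 0
  mem_torsionFree_iff : ∀ N : ModuleCat.{u} R, N ∈ F ↔ ∀ M ∈ T, ∀ f : M ⟶ N, f = 0

/-- A class of modules is hereditary (closed under submodules). -/
def HereditaryClass (T : Set (ModuleCat.{u} R)) : Prop :=
  ∀ M : ModuleCat.{u} R, M ∈ T → ∀ S : Submodule R M, ModuleCat.of R S ∈ T

/-- A class of modules is closed under direct limits (directed colimits). -/
def ClosedUnderDirectedColimits (F : Set (ModuleCat.{u} R)) : Prop :=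
  ∀ (ι : Type u) [Preorder ι] [IsDirected ι (· ≤ ·)] [Nonempty ι]
    (D : ι ⥤ ModuleCat.{u} R) (c : Limits.Cocone D), Limits.IsColimit c →
    (∀ i, D.obj i ∈ F) → c.pt ∈ F

/-- The injective modules lying in a class `F`. -/
def injOf (F : Set (ModuleCat.{u} R)) : Set (ModuleCat.{u} R) :=
  {E | Injective E ∧ E ∈ F}

/-- Condition (††): for every directed system in `𝓔`, every injective module `G`
receiving an injective map from the direct limit with essential image belongs
to `𝓔`. -/
def DaggerDagger (𝓔 : Set (ModuleCat.{u} R)) : Prop :=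
  ∀ (ι : Type u) [Preorder ι] [IsDirected ι (· ≤ ·)] [Nonempty ι]
    (D : ι ⥤ ModuleCat.{u} R), (∀ i, D.obj i ∈ 𝓔) →
    ∀ (c : Limits.Cocone D), Limits.IsColimit c →
    ∀ G : ModuleCat.{u} R, Injective G →
    ∀ j : c.pt ⟶ G, Function.Injective j →
    (∀ N : Submodule R G, N ≠ ⊥ → N ⊓ LinearMap.range j.hom ≠ ⊥) → G ∈ 𝓔

section AuxLemmas

lemma memF_of_inj {T F : Set (ModuleCat.{u} R)} (h : IsTorsionPair T F)
    {N P : ModuleCat.{u} R} (f : N ⟶ P) (hf : Function.Injective f) (hP : P ∈ F) :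
    N ∈ F := by
  rw [h.mem_torsionFree_iff]
  intro M hM g
  have h0 : g ≫ f = 0 := (h.mem_torsionFree_iff P).mp hP M hM (g ≫ f)
  refine ModuleCat.hom_ext (LinearMap.ext fun x => hf ?_)
  calc f (g x) = (g ≫ f) x := rfl
    _ = (0 : M ⟶ P) x := by rw [h0]
    _ = 0 := rfl
    _ = f ((0 : M ⟶ N) x) := by simp

lemma memF_pi {T F : Set (ModuleCat.{u} R)} (h : IsTorsionPair T F)
    {X : Type u} (A : X → Type u) [∀ x, AddCommGroup (A x)] [∀ x, Module R (A x)]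
    (hA : ∀ x, ModuleCat.of R (A x) ∈ F) :
    ModuleCat.of R (∀ x, A x) ∈ F := by
  rw [h.mem_torsionFree_iff]
  intro M hM g
  ext m x
  show g m x = 0
  have hx : (ModuleCat.ofHom ((LinearMap.proj x).comp g.hom) :
      M ⟶ ModuleCat.of R (A x)) = 0 :=
    (h.mem_torsionFree_iff (ModuleCat.of R (A x))).mp (hA x) M hM _
  have := LinearMap.ext_iff.mp (congrArg ModuleCat.Hom.hom hx) m
  simpa using this

lemma memF_of_essential {T F : Set (ModuleCat.{u} R)} (h : IsTorsionPair T F)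
    (hher : HereditaryClass T) {N G : ModuleCat.{u} R} (hN : N ∈ F)
    (j : N ⟶ G) (hj : Function.Injective j)
    (hess : ∀ K : Submodule R G, K ≠ ⊥ → K ⊓ LinearMap.range j.hom ≠ ⊥) : G ∈ F := by
  rw [h.mem_torsionFree_iff]
  intro M hM f
  let S : Submodule R M := Submodule.comap f.hom (LinearMap.range j.hom)
  have hS : ModuleCat.of R S ∈ T := hher M hM S
  let e : N ≃ₗ[R] LinearMap.range j.hom := LinearEquiv.ofInjective _ hj
  let g : ModuleCat.of R S ⟶ N := ModuleCat.ofHom (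
    e.symm.toLinearMap ∘ₗ LinearMap.codRestrict (LinearMap.range j.hom)
      (f.hom ∘ₗ S.subtype) (fun s => s.2))
  have hg : g = 0 := (h.mem_torsionFree_iff N).mp hN _ hS g
  have key : ∀ m : M, m ∈ S → f m = 0 := by
    intro m hm
    have h1 : j.hom (g ⟨m, hm⟩) = f m := by
      show j.hom (e.symm ⟨f m, hm⟩) = f m
      have := e.apply_symm_apply ⟨f m, hm⟩
      have h2 : ((e (e.symm ⟨f m, hm⟩)) : G) = f m := by rw [this]
      rwa [LinearEquiv.ofInjective_apply] at h2
    rw [hg] at h1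
    rw [← h1]
    show j.hom ((0 : ModuleCat.of R S ⟶ N) ⟨m, hm⟩) = 0
    simp
  have hrange : LinearMap.range f.hom = ⊥ := by
    by_contra hne
    obtain ⟨y, hy, hy0⟩ := (Submodule.ne_bot_iff _).mp (hess _ hne)
    obtain ⟨hyf, hyj⟩ := Submodule.mem_inf.mp hy
    obtain ⟨m, hm⟩ := hyf
    have hmS : m ∈ S := by
      show f m ∈ LinearMap.range j.hom
      rw [hm]; exact hyj
    exact hy0 (hm ▸ key m hmS)
  exact ModuleCat.hom_ext (LinearMap.range_eq_bot.mp hrange)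

lemma exists_hull (N : ModuleCat.{u} R) :
    ∃ (G : ModuleCat.{u} R) (j : N ⟶ G), CategoryTheory.Injective G ∧ Function.Injective j ∧
      ∀ K : Submodule R G, K ≠ ⊥ → K ⊓ LinearMap.range j.hom ≠ ⊥ := by
  classical
  let I : ModuleCat.{u} R := Injective.under N
  let ι0 : N ⟶ I := Injective.ι N
  have hι0 : Function.Injective ι0 := (ModuleCat.mono_iff_injective ι0).mp inferInstance
  have hIinj : Module.Injective R I :=
    Module.injective_module_of_injective_object R I (inj := Injective.injective_under N)
  set S0 : Submodule R I := LinearMap.range ι0.hom with hS0def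
  -- Zorn 1 : maximal essential extension H of S0 inside I
  have hS0mem : S0 ∈ {H : Submodule R I | S0 ≤ H ∧
      ∀ K : Submodule R I, K ≤ H → K ⊓ S0 = ⊥ → K = ⊥} :=
    ⟨le_rfl, fun K hK hK0 => by rwa [inf_eq_left.mpr hK] at hK0⟩
  obtain ⟨H, hS0H, hH⟩ := zorn_le_nonempty₀
    {H : Submodule R I | S0 ≤ H ∧ ∀ K : Submodule R I, K ≤ H → K ⊓ S0 = ⊥ → K = ⊥}
    (fun c hc hchain y hy => by
      refine ⟨sSup c, ⟨(hc hy).1.trans (le_sSup hy), fun K hK hK0 => ?_⟩,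
        fun z hz => le_sSup hz⟩
      rw [Submodule.eq_bot_iff]
      intro x hxK
      by_contra hx0
      have hxs : x ∈ sSup c := hK hxK
      rw [Submodule.mem_sSup_of_directed ⟨y, hy⟩ hchain.directedOn] at hxs
      obtain ⟨H', hH'c, hxH'⟩ := hxs
      have hsp : Submodule.span R {x} = ⊥ :=
        (hc hH'c).2 _ (Submodule.span_le.mpr (Set.singleton_subset_iff.mpr hxH'))
          (le_bot_iff.mp (le_trans (inf_le_inf_right _
            (Submodule.span_le.mpr (Set.singleton_subset_iff.mpr hxK))) hK0.le))
      have hmem : x ∈ Submodule.span R {x} := Submodule.mem_span_singleton_self x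
      rw [hsp, Submodule.mem_bot R] at hmem
      exact hx0 hmem)
    S0 hS0mem
  -- Zorn 2 : complement K of H
  obtain ⟨K, -, hK⟩ := zorn_le_nonempty₀ {K : Submodule R I | K ⊓ H = ⊥}
    (fun c hc hchain y hy => by
      refine ⟨sSup c, ?_, fun z hz => le_sSup hz⟩
      rw [Set.mem_setOf_eq, Submodule.eq_bot_iff]
      intro x hx
      obtain ⟨hx1, hx2⟩ := Submodule.mem_inf.mp hx
      rw [Submodule.mem_sSup_of_directed ⟨y, hy⟩ hchain.directedOn] at hx1
      obtain ⟨K', hK'c, hxK'⟩ := hx1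
      have : x ∈ K' ⊓ H := Submodule.mem_inf.mpr ⟨hxK', hx2⟩
      rwa [hc hK'c, Submodule.mem_bot R] at this)
    ⊥ (by simp)
  have hKH : K ⊓ H = ⊥ := hK.1
  -- H embeds essentially in I/K
  let φ : H →ₗ[R] (I ⧸ K) := K.mkQ ∘ₗ H.subtype
  have hφ : Function.Injective φ := by
    apply LinearMap.ker_eq_bot.mp
    rw [Submodule.eq_bot_iff]
    intro x hx
    have hxK : (x : I) ∈ K := by
      have : K.mkQ (x : I) = 0 := hx
      rwa [Submodule.mkQ_apply, Submodule.Quotient.mk_eq_zero] at this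
    have : (x : I) ∈ K ⊓ H := Submodule.mem_inf.mpr ⟨hxK, x.2⟩
    rw [hKH, Submodule.mem_bot R] at this
    exact Subtype.ext this
  have hessQ : ∀ L : Submodule R (I ⧸ K), L ≠ ⊥ → L ⊓ LinearMap.range φ ≠ ⊥ := by
    intro L hL
    obtain ⟨x, hxL, hx0⟩ := (Submodule.ne_bot_iff L).mp hL
    have hKL' : K ≤ L.comap K.mkQ := by
      intro k hk
      show K.mkQ k ∈ L
      have : K.mkQ k = 0 := by rwa [Submodule.mkQ_apply, Submodule.Quotient.mk_eq_zero]
      rw [this]; exact L.zero_mem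
    have hL'H : L.comap K.mkQ ⊓ H ≠ ⊥ := by
      intro hbot
      have hle : L.comap K.mkQ ≤ K := hK.2 hbot hKL'
      obtain ⟨z, hz⟩ := K.mkQ_surjective x
      have hzL' : z ∈ L.comap K.mkQ := by show K.mkQ z ∈ L; rw [hz]; exact hxL
      apply hx0
      rw [← hz, Submodule.mkQ_apply, Submodule.Quotient.mk_eq_zero]
      exact hle hzL'
    obtain ⟨w, hw, hw0⟩ := (Submodule.ne_bot_iff _).mp hL'H
    obtain ⟨hwL', hwH⟩ := Submodule.mem_inf.mp hw
    refine (Submodule.ne_bot_iff _).mpr ⟨K.mkQ w,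
      Submodule.mem_inf.mpr ⟨hwL', ⟨⟨w, hwH⟩, rfl⟩⟩, fun h0 => ?_⟩
    have hwK : w ∈ K := by rwa [Submodule.mkQ_apply, Submodule.Quotient.mk_eq_zero] at h0
    have : w ∈ K ⊓ H := Submodule.mem_inf.mpr ⟨hwK, hwH⟩
    rw [hKH, Submodule.mem_bot R] at this
    exact hw0 this
  -- extend the inclusion H ↪ I along φ
  obtain ⟨σ, hσ⟩ := hIinj.out φ hφ H.subtype
  have hσinj : Function.Injective σ := by
    apply LinearMap.ker_eq_bot.mp
    by_contra hne
    obtain ⟨q, hq, hq0⟩ := (Submodule.ne_bot_iff _).mp (hessQ _ hne)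
    obtain ⟨hqker, hqr⟩ := Submodule.mem_inf.mp hq
    obtain ⟨z, hz⟩ := hqr
    have hz0 : (z : I) = 0 := by
      have h1 : σ q = H.subtype z := by rw [← hz]; exact hσ z
      have h2 : σ q = 0 := LinearMap.mem_ker.mp hqker
      rw [h1] at h2; exact h2
    apply hq0
    rw [← hz, ZeroMemClass.coe_eq_zero.mp hz0, map_zero]
  have hHrange : H ≤ LinearMap.range σ := fun x hx => ⟨φ ⟨x, hx⟩, hσ ⟨x, hx⟩⟩
  have hrmem : LinearMap.range σ ∈ {H : Submodule R I | S0 ≤ H ∧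
      ∀ K : Submodule R I, K ≤ H → K ⊓ S0 = ⊥ → K = ⊥} := by
    refine ⟨hH.1.1.trans hHrange, fun K' hK' h0 => ?_⟩
    rw [Submodule.eq_bot_iff]
    intro x hxK'
    by_contra hx0
    obtain ⟨y, hy⟩ := hK' hxK'
    have hy0 : y ≠ 0 := fun hh => hx0 (by rw [← hy, hh, map_zero])
    have hLne : K'.comap σ ≠ ⊥ := by
      intro hh
      apply hy0
      have hmem : y ∈ K'.comap σ := by show σ y ∈ K'; rw [hy]; exact hxK'
      rwa [hh, Submodule.mem_bot R] at hmem
    obtain ⟨q, hq, hq0⟩ := (Submodule.ne_bot_iff _).mp (hessQ _ hLne)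
    obtain ⟨hqL, hqr⟩ := Submodule.mem_inf.mp hq
    obtain ⟨w, hwphi⟩ := hqr
    have hσq : σ q = (w : I) := by rw [← hwphi]; exact hσ w
    have hwK' : (w : I) ∈ K' := by rw [← hσq]; exact hqL
    have hw0 : (w : I) ≠ 0 := fun hh => hq0 (hσinj (by rw [hσq, hh, map_zero]))
    have hsp : Submodule.span R {(w : I)} = ⊥ :=
      hH.1.2 _ (Submodule.span_le.mpr (Set.singleton_subset_iff.mpr w.2))
        (le_bot_iff.mp (le_trans (inf_le_inf_right _
          (Submodule.span_le.mpr (Set.singleton_subset_iff.mpr hwK'))) h0.le))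
    have hmem : (w : I) ∈ Submodule.span R {(w : I)} := Submodule.mem_span_singleton_self _
    rw [hsp, Submodule.mem_bot R] at hmem
    exact hw0 hmem
  have hmax : LinearMap.range σ ≤ H := hH.2 hrmem hHrange
  let ρ : I →ₗ[R] H := LinearMap.codRestrict H (σ ∘ₗ K.mkQ) (fun x => hmax ⟨K.mkQ x, rfl⟩)
  have hρ : ∀ x : H, ρ (x : I) = x := by
    intro x
    apply Subtype.ext
    show σ (K.mkQ (x : I)) = (x : I)
    exact hσ x
  have hHinjmod : Module.Injective R H := by
    constructor
    intro X Y _ _ _ _ f hf g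
    obtain ⟨h', hh'⟩ := hIinj.out f hf (H.subtype ∘ₗ g)
    refine ⟨ρ ∘ₗ h', fun x => ?_⟩
    show ρ (h' (f x)) = g x
    rw [hh' x]
    exact hρ (g x)
  refine ⟨ModuleCat.of R H, ModuleCat.ofHom (LinearMap.codRestrict H ι0.hom (fun n => hS0H ⟨n, rfl⟩)),
    Module.injective_object_of_injective_module R H (inj := hHinjmod),
    fun a b hab => hι0 (congrArg Subtype.val hab), ?_⟩
  intro KG hKG
  obtain ⟨k, hk, hk0⟩ := (Submodule.ne_bot_iff _).mp hKG
  let k' : H := k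
  have hk'0 : k' ≠ 0 := hk0
  have hco : (k' : I) ≠ 0 := fun hh => hk'0 (Subtype.ext hh)
  have hsp : Submodule.span R {(k' : I)} ⊓ S0 ≠ ⊥ := by
    intro hh
    have h1 : Submodule.span R {(k' : I)} = ⊥ :=
      hH.1.2 _ (Submodule.span_le.mpr (Set.singleton_subset_iff.mpr k'.2)) hh
    have hmem : (k' : I) ∈ Submodule.span R {(k' : I)} := Submodule.mem_span_singleton_self _
    rw [h1, Submodule.mem_bot R] at hmem
    exact hco hmem
  obtain ⟨y, hy, hy0⟩ := (Submodule.ne_bot_iff _).mp hsp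
  obtain ⟨hysp, hyS0⟩ := Submodule.mem_inf.mp hy
  obtain ⟨r, hr⟩ := Submodule.mem_span_singleton.mp hysp
  obtain ⟨n, hn⟩ := hyS0
  have hrk : ((r • k' : H) : I) = y := by rw [← hr]; rfl
  refine (Submodule.ne_bot_iff _).mpr ⟨r • k, Submodule.mem_inf.mpr ⟨KG.smul_mem r hk,
    ⟨n, ?_⟩⟩, fun hh => ?_⟩
  · apply Subtype.ext
    show ι0.hom n = ((r • k' : H) : I)
    rw [hn, hrk]
  · apply hy0
    rw [← hrk]
    have h2 : (r • k' : H) = 0 := hh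
    rw [h2]
    simp

lemma injective_fun_mod {Q : Type u} [AddCommGroup Q] [Module R Q]
    (hQ : Module.Injective R Q) (X : Type u) : Module.Injective R (X → Q) := by
  constructor
  intro A B _ _ _ _ f hf g
  choose hs hh using fun x : X => hQ.out f hf ((LinearMap.proj x).comp g)
  exact ⟨LinearMap.pi hs, fun a => funext fun x => hh x a⟩

lemma exists_cogen {T F : Set (ModuleCat.{u} R)} (h : IsTorsionPair T F)
    (hher : HereditaryClass T) :
    ∃ C : ModuleCat.{u} R, CategoryTheory.Injective C ∧ C ∈ F ∧
      ∀ M : ModuleCat.{u} R, M ∈ F → ∀ x : M, x ≠ 0 → ∃ f : M ⟶ C, f x ≠ 0 := by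
  classical
  let P : ModuleCat.{u} R :=
    ModuleCat.of R (∀ I : {I : Ideal R // ModuleCat.of R (R ⧸ I) ∈ F}, R ⧸ (I : Ideal R))
  have hP : P ∈ F := memF_pi h _ (fun I => I.2)
  obtain ⟨C, jC, hCinj, hjC, hCess⟩ := exists_hull P
  have hCF : C ∈ F := memF_of_essential h hher hP jC hjC hCess
  have hCmod : Module.Injective R C :=
    Module.injective_module_of_injective_object R C (inj := hCinj)
  refine ⟨C, hCinj, hCF, ?_⟩
  intro M hMF x hx
  let ℓ : R →ₗ[R] M := LinearMap.toSpanSingleton R M x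
  let uu : (R ⧸ LinearMap.ker ℓ) →ₗ[R] M := (LinearMap.ker ℓ).liftQ ℓ le_rfl
  have hu : Function.Injective uu :=
    LinearMap.ker_eq_bot.mp (Submodule.ker_liftQ_eq_bot _ _ _ le_rfl)
  have hRF : ModuleCat.of R (R ⧸ LinearMap.ker ℓ) ∈ F :=
    memF_of_inj h (N := ModuleCat.of R (R ⧸ LinearMap.ker ℓ)) (P := M) (ModuleCat.ofHom uu) hu hMF
  let sing : (R ⧸ LinearMap.ker ℓ) →ₗ[R]
      (∀ I : {I : Ideal R // ModuleCat.of R (R ⧸ I) ∈ F}, R ⧸ (I : Ideal R)) :=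
    LinearMap.single R (fun I : {I : Ideal R // ModuleCat.of R (R ⧸ I) ∈ F} => R ⧸ (I : Ideal R)) ⟨LinearMap.ker ℓ, hRF⟩
  let g0 : (R ⧸ LinearMap.ker ℓ) →ₗ[R] C := jC.hom ∘ₗ sing
  obtain ⟨f, hf⟩ := hCmod.out uu hu g0
  refine ⟨ModuleCat.ofHom f, fun h0 => ?_⟩
  have hx1 : uu (Submodule.Quotient.mk 1) = x := by
    show ℓ 1 = x
    exact LinearMap.toSpanSingleton_apply_one R M x
  have h1 : g0 (Submodule.Quotient.mk 1) = 0 := by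
    rw [← hf]
    rw [hx1]
    exact h0
  have h2 : sing (Submodule.Quotient.mk 1) = 0 := by
    apply hjC
    rw [map_zero]
    exact h1
  have h3 : (Submodule.Quotient.mk 1 : R ⧸ LinearMap.ker ℓ) = 0 := by
    have := congrFun (congrArg (fun v => (v : ∀ I : {I : Ideal R // ModuleCat.of R (R ⧸ I) ∈ F},
        R ⧸ (I : Ideal R))) h2) ⟨LinearMap.ker ℓ, hRF⟩
    simpa [sing, LinearMap.coe_single] using this
  rw [Submodule.Quotient.mk_eq_zero] at h3
  apply hx
  have : ℓ 1 = 0 := h3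
  rwa [LinearMap.toSpanSingleton_apply_one] at this

end AuxLemmas

/-- For a hereditary torsion pair `(T,F)` with associated class `𝓔` of injective
torsion-free modules: `F` is closed under direct limits iff `𝓔` satisfies (††). -/
theorem stmt9 (T F : Set (ModuleCat.{u} R)) (h : IsTorsionPair T F)
    (hher : HereditaryClass T) :
    ClosedUnderDirectedColimits F ↔ DaggerDagger (injOf F) := by
  constructor
  · intro hcl ι _ _ _ D hD c hc G hG j hj hess
    exact ⟨hG, memF_of_essential h hher (hcl ι D c hc fun i => (hD i).2) j hj hess⟩
  · intro hdd ι _ _ _ D c hc hDF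
    obtain ⟨C, hCinj, hCF, hsep⟩ := exists_cogen h hher
    have hCmod : Module.Injective R C :=
      Module.injective_module_of_injective_object R C (inj := hCinj)
    let Dc : ι ⥤ ModuleCat.{u} R :=
    { obj := fun i => ModuleCat.of R ((D.obj i ⟶ C) → C)
      map := fun {i j} φ => ModuleCat.ofHom
        { toFun := fun e g => e (D.map φ ≫ g)
          map_add' := fun e e' => rfl
          map_smul' := fun r e => rfl }
      map_id := fun i => by
        refine ModuleCat.hom_ext (LinearMap.ext fun e => funext fun g => ?_)
        show e (D.map (𝟙 i) ≫ g) = e g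
        rw [D.map_id, Category.id_comp]
      map_comp := fun {i j k} φ ψ => by
        refine ModuleCat.hom_ext (LinearMap.ext fun e => funext fun g => ?_)
        show e (D.map (φ ≫ ψ) ≫ g) = e (D.map φ ≫ (D.map ψ ≫ g))
        rw [D.map_comp, Category.assoc] }
    have hDcinj : ∀ i, CategoryTheory.Injective (Dc.obj i) := fun i =>
      Module.injective_object_of_injective_module R _ (inj := injective_fun_mod hCmod _)
    have hDcF : ∀ i, Dc.obj i ∈ F := fun i => memF_pi h (fun _ => C) (fun _ => hCF)
    let η : D ⟶ Dc :=
    { app := fun i => ModuleCat.ofHom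
        { toFun := fun m g => g m
          map_add' := fun m m' => funext fun g => map_add g.hom m m'
          map_smul' := fun r m => funext fun g => map_smul g.hom r m }
      naturality := fun i j φ => rfl }
    let c' : Limits.Cocone Dc := Limits.colimit.cocone Dc
    have hc' : Limits.IsColimit c' := Limits.colimit.isColimit Dc
    let Kc : Limits.Cocone D := (Limits.Cocone.precompose η).obj c'
    let hmap : c.pt ⟶ c'.pt := hc.desc Kc
    have hfac : ∀ i, c.ι.app i ≫ hmap = η.app i ≫ c'.ι.app i := fun i => hc.fac Kc i
    have hη : ∀ i (m : D.obj i), η.app i m = 0 → m = 0 := by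
      intro i m hm
      by_contra hm0
      obtain ⟨g, hg⟩ := hsep (D.obj i) (hDF i) m hm0
      exact hg (congrFun hm g)
    have hmapinj : Function.Injective hmap := by
      rw [injective_iff_map_eq_zero]
      intro x hx0
      obtain ⟨i, y, hy⟩ := Limits.Types.jointly_surjective (D ⋙ forget (ModuleCat.{u} R))
        (Limits.isColimitOfPreserves (forget (ModuleCat.{u} R)) hc) x
      have hy' : c.ι.app i y = x := hy
      have h1 : c'.ι.app i (η.app i y) = hmap (c.ι.app i y) :=
        (LinearMap.ext_iff.mp (congrArg ModuleCat.Hom.hom (hfac i)) y).symm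
      rw [hy', hx0] at h1
      have h2 : ((forget (ModuleCat.{u} R)).mapCocone c').ι.app i (η.app i y) =
          ((forget (ModuleCat.{u} R)).mapCocone c').ι.app i (0 : Dc.obj i) := by
        show c'.ι.app i (η.app i y) = c'.ι.app i 0
        rw [map_zero]
        exact h1
      obtain ⟨k, f1, f2, hk⟩ := (Limits.Types.FilteredColimit.isColimit_eq_iff
        (Dc ⋙ forget (ModuleCat.{u} R))
        (Limits.isColimitOfPreserves (forget (ModuleCat.{u} R)) hc')).mp h2
      have hk0 : (Dc.map f1) (η.app i y) = 0 := by
        have hz : (Dc.map f2) (0 : Dc.obj i) = 0 := map_zero _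
        exact hk.trans hz
      have hnat : η.app k (D.map f1 y) = (Dc.map f1) (η.app i y) :=
        LinearMap.ext_iff.mp (congrArg ModuleCat.Hom.hom (η.naturality f1)) y
      have hD0 : D.map f1 y = 0 := hη k _ (hnat.trans hk0)
      have hw : c.ι.app k (D.map f1 y) = c.ι.app i y := LinearMap.ext_iff.mp (congrArg ModuleCat.Hom.hom (c.w f1)) y
      rw [hD0, map_zero] at hw
      rw [← hy', ← hw]
    obtain ⟨G, jG, hGi, hjGi, hGess⟩ := exists_hull c'.pt
    have hGmem := hdd ι Dc (fun i => ⟨hDcinj i, hDcF i⟩) c' hc' G hGi jG hjGi hGess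
    exact memF_of_inj h hmap hmapinj (memF_of_inj h jG hjGi hGmem.2)
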